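/- If v > 0 and c > v, then every root of the characteristic polynomial of the Jacobian matrix J(0,0,1) of the reduced replicator vector field at the equilibrium P₁ = (0,0,1) is a negative real number; explicitly, the eigenvalues −v/4, −c/4, and (v−c)/4 are all negative. -/

import Mathlib

open Polynomial

noncomputable section

/-- The reduced replicator vector field of the asymmetric Hawk-Dove game. -/
def F (v c : ℝ) (p : Fin 3 → ℝ) : Fin 3 → ℝ :=
  ![ (1/4) * p 0 * (c * (2*(p 0)^2 + 2*(p 0)*(p 1 + p 2 - 1) + 2*(p 1)*(p 2) - p 1 - p 2)
        - v * (2*(p 0) + p 1 + p 2 - 2)),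
     -(1/4) * p 1 * (v * (2*(p 0) + p 1 + p 2 - 1) - c * (2*(p 0) + 2*(p 1) - 1) * (p 0 + p 2)),
     -(1/4) * p 2 * (v * (2*(p 0) + p 1 + p 2 - 1) - c * (p 0 + p 1) * (2*(p 0) + 2*(p 2) - 1)) ]

/-- The Jacobian matrix of `F v c` at `p`: the matrix of the Fréchet derivative
with respect to the standard basis. -/
def J (v c : ℝ) (p : Fin 3 → ℝ) : Matrix (Fin 3) (Fin 3) ℝ :=
  Matrix.of fun i j => fderiv ℝ (F v c) p (Pi.single j 1) i

lemma hF (v c : ℝ) : HasFDerivAt (F v c)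
    ((ContinuousLinearMap.pi
      ![((v-c)/4) • ContinuousLinearMap.proj 0,
        (-(c/4)) • ContinuousLinearMap.proj 1,
        ((c-2*v)/4) • ContinuousLinearMap.proj 0 + ((c-v)/4) • ContinuousLinearMap.proj 1
          + (-(v/4)) • ContinuousLinearMap.proj 2]
      : (Fin 3 → ℝ) →L[ℝ] (Fin 3 → ℝ))) ![0,0,1] := by
  rw [hasFDerivAt_pi']
  have h0 := hasFDerivAt_apply (𝕜 := ℝ) (0 : Fin 3) ![(0:ℝ),0,1]
  have h1 := hasFDerivAt_apply (𝕜 := ℝ) (1 : Fin 3) ![(0:ℝ),0,1]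
  have h2 := hasFDerivAt_apply (𝕜 := ℝ) (2 : Fin 3) ![(0:ℝ),0,1]
  intro i
  fin_cases i
  · simp only [F, Matrix.cons_val_zero, pow_two]
    have hA := (((((h0.mul h0).const_mul 2).add
        ((h0.const_mul 2).mul ((h1.add h2).sub_const 1))).add
        ((h1.const_mul 2).mul h2)).sub h1).sub h2
    have hB := (((h0.const_mul 2).add h1).add h2).sub_const 2
    have ht := (h0.const_mul (1/4)).mul ((hA.const_mul c).sub (hB.const_mul v))
    convert ht using 1
    · rfl
    · rfl
    ext x
    simp [ContinuousLinearMap.proj_apply, Pi.single_apply]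
    ring
  · simp only [F, Matrix.cons_val_one, Matrix.head_cons]
    have hB1 := (((h0.const_mul 2).add h1).add h2).sub_const 1
    have hC1 := ((h0.const_mul 2).add (h1.const_mul 2)).sub_const 1
    have ht := (h1.const_mul (-(1/4))).mul
      ((hB1.const_mul v).sub ((hC1.const_mul c).mul (h0.add h2)))
    convert ht using 1
    · rfl
    · rfl
    ext x
    simp [ContinuousLinearMap.proj_apply, Pi.single_apply]
    ring
  · simp only [F, Matrix.cons_val_two, Matrix.tail_cons, Matrix.head_cons]
    have hB1 := (((h0.const_mul 2).add h1).add h2).sub_const 1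
    have hD := ((h0.add h1).const_mul c).mul
      (((h0.const_mul 2).add (h2.const_mul 2)).sub_const 1)
    have ht := (h2.const_mul (-(1/4))).mul ((hB1.const_mul v).sub hD)
    convert ht using 1
    · rfl
    · rfl
    ext x
    simp [ContinuousLinearMap.proj_apply, Pi.single_apply]
    ring

lemma Jval (v c : ℝ) : J v c ![0,0,1] =
    !![(v-c)/4, 0, 0; 0, -(c/4), 0; (c-2*v)/4, (c-v)/4, -(v/4)] := by
  have h := (hF v c).fderiv
  ext i j
  simp only [J, Matrix.of_apply, h]
  fin_cases i <;> fin_cases j <;>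
    simp [ContinuousLinearMap.pi_apply, ContinuousLinearMap.proj_apply,
      ContinuousLinearMap.add_apply, ContinuousLinearMap.smul_apply, Pi.single_apply]

example : True := trivial

lemma cpval (v c : ℝ) :
    (!![(v-c)/4, 0, 0; 0, -(c/4), 0; (c-2*v)/4, (c-v)/4, -(v/4)] : Matrix (Fin 3) (Fin 3) ℝ).charpoly
      = (X - C ((v-c)/4)) * (X - C (-(c/4))) * (X - C (-(v/4))) := by
  rw [Matrix.charpoly, Matrix.det_fin_three]
  simp [Matrix.charmatrix_apply, Matrix.diagonal_apply]

theorem P1_stable_node (v c : ℝ) (hv : 0 < v) (hc : v < c) :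
    (-(v/4) < 0 ∧ -(c/4) < 0 ∧ (v - c)/4 < 0) ∧
    ∀ μ : ℂ, aeval μ ((J v c ![0, 0, 1]).charpoly) = 0 →
      ∃ r : ℝ, μ = (r : ℂ) ∧ r < 0 := by
  refine ⟨⟨by linarith, by linarith, by linarith⟩, ?_⟩
  intro μ hμ
  rw [Jval, cpval] at hμ
  simp only [map_mul, map_sub, aeval_X, aeval_C] at hμ
  rcases mul_eq_zero.1 hμ with h | h
  · rcases mul_eq_zero.1 h with h | h
    · exact ⟨(v-c)/4, by rw [sub_eq_zero] at h; exact_mod_cast h, by linarith⟩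
    · exact ⟨-(c/4), by rw [sub_eq_zero] at h; exact_mod_cast h, by linarith⟩
  · exact ⟨-(v/4), by rw [sub_eq_zero] at h; exact_mod_cast h, by linarith⟩
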